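/- For a read-once formula φ = φ_l ∘ φ_r (∘ ∈ {∧, ∨, ⊕}) over disjoint variable sets and a total assignment X, the DEPENDS recursion correctly computes the flip distance: defining deps(ψ) = 1 for a leaf, deps(¬ψ) = deps(ψ), and for a binary gate deps(φ) = deps(φ_l) + deps(φ_r) if flipping neither single child's value alone changes φ's value, and deps(φ) = min over the children whose single flip changes φ's value otherwise, one has deps(φ) = d(φ, X) for every read-once φ that is non-constant. -/

import Mathlib

/-- Propositional formulae over variables `α`, with connectives ¬, ∧, ∨, ⊕. -/
inductive Fm (α : Type) : Type
  | var : α → Fm α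
  | not : Fm α → Fm α
  | and : Fm α → Fm α → Fm α
  | or  : Fm α → Fm α → Fm α
  | xor : Fm α → Fm α → Fm α

/-- Classical two-valued evaluation under a total assignment. -/
def evalB {α : Type} (σ : α → Bool) : Fm α → Bool
  | .var v => σ v
  | .not φ => !(evalB σ φ)
  | .and φ ψ => evalB σ φ && evalB σ ψ
  | .or φ ψ => evalB σ φ || evalB σ ψ
  | .xor φ ψ => Bool.xor (evalB σ φ) (evalB σ ψ)

/-- Strong Kleene (K3) three-valued evaluation under a partial assignment;
`none` denotes "unassigned". -/
def evalK {α : Type} (τ : α → Option Bool) : Fm α → Option Bool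
  | .var v => τ v
  | .not φ => (evalK τ φ).map (fun b => !b)
  | .and φ ψ =>
      match evalK τ φ, evalK τ ψ with
      | some false, _ => some false
      | _, some false => some false
      | some true, some true => some true
      | _, _ => none
  | .or φ ψ =>
      match evalK τ φ, evalK τ ψ with
      | some true, _ => some true
      | _, some true => some true
      | some false, some false => some false
      | _, _ => none
  | .xor φ ψ =>
      match evalK τ φ, evalK τ ψ with
      | some a, some b => some (Bool.xor a b)
      | _, _ => none

/-- The total assignment `σ` extends the partial assignment `τ`. -/
def Extends {α : Type} (τ : α → Option Bool) (σ : α → Bool) : Prop :=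
  ∀ v b, τ v = some b → σ v = b

/-- The list of variables occurring in a formula (with multiplicity). -/
def varsOf {α : Type} : Fm α → List α
  | .var v => [v]
  | .not φ => varsOf φ
  | .and φ ψ => varsOf φ ++ varsOf ψ
  | .or φ ψ => varsOf φ ++ varsOf ψ
  | .xor φ ψ => varsOf φ ++ varsOf ψ

/-- A read-once formula: each variable occurs at most once. -/
def ReadOnce {α : Type} (φ : Fm α) : Prop := (varsOf φ).Nodup

/-- Flip the bits of a total assignment at the variables in `S`. -/
def flipV {α : Type} [DecidableEq α] (X : α → Bool) (S : Finset α) : α → Bool :=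
  fun v => if v ∈ S then !(X v) else X v

/-- Flip distance of a formula: minimum number of variables whose values must
be flipped in `X` to change the truth value of `φ`. -/
noncomputable def fmDist {α : Type} [DecidableEq α] (φ : Fm α) (X : α → Bool) : ℕ :=
  sInf {k : ℕ | ∃ S : Finset α, S.card = k ∧ evalB (flipV X S) φ ≠ evalB X φ}

/-- The DEPENDS recursion: `1` at leaves, passed through ¬, and at a binary
gate either the sum of the children's values (if flipping neither single
child's value alone changes the gate's value) or the min over the children
whose single flip changes the gate's value. -/
def deps {α : Type} (X : α → Bool) : Fm α → ℕ
  | .var _ => 1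
  | .not φ => deps X φ
  | .and φ ψ =>
      let a := evalB X φ; let b := evalB X ψ
      if ((!a) && b) ≠ (a && b) then
        if (a && !b) ≠ (a && b) then min (deps X φ) (deps X ψ) else deps X φ
      else if (a && !b) ≠ (a && b) then deps X ψ
      else deps X φ + deps X ψ
  | .or φ ψ =>
      let a := evalB X φ; let b := evalB X ψ
      if ((!a) || b) ≠ (a || b) then
        if (a || !b) ≠ (a || b) then min (deps X φ) (deps X ψ) else deps X φ
      else if (a || !b) ≠ (a || b) then deps X ψ
      else deps X φ + deps X ψ
  | .xor φ ψ =>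
      let a := evalB X φ; let b := evalB X ψ
      if Bool.xor (!a) b ≠ Bool.xor a b then
        if Bool.xor a (!b) ≠ Bool.xor a b then min (deps X φ) (deps X ψ) else deps X φ
      else if Bool.xor a (!b) ≠ Bool.xor a b then deps X ψ
      else deps X φ + deps X ψ

section Aux
variable {α : Type} [DecidableEq α]

lemma evalB_congr (φ : Fm α) (X Y : α → Bool) (h : ∀ v ∈ varsOf φ, X v = Y v) :
    evalB X φ = evalB Y φ := by
  induction φ with
  | var v => exact h v (by simp [varsOf])
  | not φ ih => simp [evalB, ih fun v hv => h v (by simpa [varsOf] using hv)]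
  | and φ ψ ihφ ihψ =>
      simp [evalB, ihφ fun v hv => h v (by simp [varsOf, hv]),
        ihψ fun v hv => h v (by simp [varsOf, hv])]
  | or φ ψ ihφ ihψ =>
      simp [evalB, ihφ fun v hv => h v (by simp [varsOf, hv]),
        ihψ fun v hv => h v (by simp [varsOf, hv])]
  | xor φ ψ ihφ ihψ =>
      simp [evalB, ihφ fun v hv => h v (by simp [varsOf, hv]),
        ihψ fun v hv => h v (by simp [varsOf, hv])]

lemma evalB_flip_congr (φ : Fm α) (X : α → Bool) (S T : Finset α)
    (h : ∀ v ∈ varsOf φ, (v ∈ S ↔ v ∈ T)) :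
    evalB (flipV X S) φ = evalB (flipV X T) φ := by
  refine evalB_congr φ _ _ fun v hv => ?_
  by_cases hvT : v ∈ T
  · simp [flipV, hvT, (h v hv).2 hvT]
  · have : v ∉ S := fun hS => hvT ((h v hv).1 hS)
    simp [flipV, hvT, this]

lemma evalB_flip_notmem (φ : Fm α) (X : α → Bool) (S : Finset α)
    (h : ∀ v ∈ varsOf φ, v ∉ S) :
    evalB (flipV X S) φ = evalB X φ := by
  refine evalB_congr φ _ _ fun v hv => ?_
  simp [flipV, h v hv]

lemma bool_eq_not {x y : Bool} (h : x ≠ y) : x = !y := by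
  cases y <;> simp_all

/-- Generic form of the binary-gate case of `deps`. -/
def gdeps (g : Bool → Bool → Bool) (a b : Bool) (dl dr : ℕ) : ℕ :=
  if g (!a) b ≠ g a b then
    (if g a (!b) ≠ g a b then min dl dr else dl)
  else if g a (!b) ≠ g a b then dr
  else dl + dr

/-- The specification of `deps`: it is achieved by some flip set contained in
the variables of the formula, and it is a lower bound on all flip sets. -/
def Spec (φ : Fm α) (X : α → Bool) : Prop :=
  (∃ S : Finset α, (∀ v ∈ S, v ∈ varsOf φ) ∧ S.card = deps X φ ∧
      evalB (flipV X S) φ ≠ evalB X φ) ∧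
  (∀ S : Finset α, evalB (flipV X S) φ ≠ evalB X φ → deps X φ ≤ S.card)

lemma gate_spec (X : α → Bool) (g : Bool → Bool → Bool)
    (hg : ∀ a b : Bool, g (!a) b = g a b → g a (!b) = g a b → g (!a) (!b) ≠ g a b)
    (φl φr : Fm α)
    (hd : ∀ v, v ∈ varsOf φl → v ∉ varsOf φr)
    (hl : Spec φl X) (hr : Spec φr X) :
    (∃ S : Finset α, (∀ v ∈ S, v ∈ varsOf φl ∨ v ∈ varsOf φr) ∧
        S.card = gdeps g (evalB X φl) (evalB X φr) (deps X φl) (deps X φr) ∧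
        g (evalB (flipV X S) φl) (evalB (flipV X S) φr)
          ≠ g (evalB X φl) (evalB X φr)) ∧
    (∀ S : Finset α,
        g (evalB (flipV X S) φl) (evalB (flipV X S) φr)
          ≠ g (evalB X φl) (evalB X φr) →
        gdeps g (evalB X φl) (evalB X φr) (deps X φl) (deps X φr) ≤ S.card) := by
  obtain ⟨⟨Sl, hSl_sub, hSl_card, hSl_chg⟩, hlow_l⟩ := hl
  obtain ⟨⟨Sr, hSr_sub, hSr_card, hSr_chg⟩, hlow_r⟩ := hr
  set a := evalB X φl with ha
  set b := evalB X φr with hb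
  -- flipping Sl does not affect φr, and vice versa
  have hSl_r : evalB (flipV X Sl) φr = b :=
    evalB_flip_notmem φr X Sl (fun v hv hvS => hd v (hSl_sub v hvS) hv)
  have hSr_l : evalB (flipV X Sr) φl = a :=
    evalB_flip_notmem φl X Sr (fun v hv hvS => hd v hv (hSr_sub v hvS))
  have hSl_l : evalB (flipV X Sl) φl = !a := bool_eq_not hSl_chg
  have hSr_r : evalB (flipV X Sr) φr = !b := bool_eq_not hSr_chg
  have hdisjSS : Disjoint Sl Sr := by
    rw [Finset.disjoint_left]
    exact fun v hv hv' => hd v (hSl_sub v hv) (hSr_sub v hv')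
  constructor
  · -- achievability
    by_cases c1 : g (!a) b ≠ g a b
    · by_cases c2 : g a (!b) ≠ g a b
      · -- min case
        rcases le_total (deps X φl) (deps X φr) with hle | hle
        · refine ⟨Sl, fun v hv => Or.inl (hSl_sub v hv), ?_, ?_⟩
          · rw [hSl_card, gdeps, if_pos c1, if_pos c2, min_eq_left hle]
          · rw [hSl_l, hSl_r]; exact c1
        · refine ⟨Sr, fun v hv => Or.inr (hSr_sub v hv), ?_, ?_⟩
          · rw [hSr_card, gdeps, if_pos c1, if_pos c2, min_eq_right hle]
          · rw [hSr_l, hSr_r]; exact c2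
      · refine ⟨Sl, fun v hv => Or.inl (hSl_sub v hv), ?_, ?_⟩
        · rw [hSl_card, gdeps, if_pos c1, if_neg c2]
        · rw [hSl_l, hSl_r]; exact c1
    · by_cases c2 : g a (!b) ≠ g a b
      · refine ⟨Sr, fun v hv => Or.inr (hSr_sub v hv), ?_, ?_⟩
        · rw [hSr_card, gdeps, if_neg c1, if_pos c2]
        · rw [hSr_l, hSr_r]; exact c2
      · -- both case
        refine ⟨Sl ∪ Sr, ?_, ?_, ?_⟩
        · intro v hv
          rcases Finset.mem_union.1 hv with h | h
          · exact Or.inl (hSl_sub v h)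
          · exact Or.inr (hSr_sub v h)
        · rw [Finset.card_union_of_disjoint hdisjSS, hSl_card, hSr_card,
            gdeps, if_neg c1, if_neg c2]
        · have el : evalB (flipV X (Sl ∪ Sr)) φl = !a := by
            rw [evalB_flip_congr φl X (Sl ∪ Sr) Sl ?_, hSl_l]
            intro v hv
            simp only [Finset.mem_union]
            exact ⟨fun h => h.resolve_right (fun h' => hd v hv (hSr_sub v h')),
              Or.inl⟩
          have er : evalB (flipV X (Sl ∪ Sr)) φr = !b := by
            rw [evalB_flip_congr φr X (Sl ∪ Sr) Sr ?_, hSr_r]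
            intro v hv
            simp only [Finset.mem_union]
            exact ⟨fun h => h.resolve_left (fun h' => hd v (hSl_sub v h') hv),
              Or.inr⟩
          rw [el, er]
          exact hg a b (not_not.1 c1) (not_not.1 c2)
  · -- lower bound
    intro S hS
    set Sl' := S ∩ (varsOf φl).toFinset with hSl'
    set Sr' := S ∩ (varsOf φr).toFinset with hSr'
    have ea : evalB (flipV X S) φl = evalB (flipV X Sl') φl := by
      refine evalB_flip_congr φl X S Sl' fun v hv => ?_
      simp [hSl', hv]
    have eb : evalB (flipV X S) φr = evalB (flipV X Sr') φr := by
      refine evalB_flip_congr φr X S Sr' fun v hv => ?_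
      simp [hSr', hv]
    set a' := evalB (flipV X S) φl with ha'
    set b' := evalB (flipV X S) φr with hb'
    have hla : a' ≠ a → deps X φl ≤ S.card := fun h => by
      have := hlow_l Sl' (by rw [← ea]; exact h)
      exact this.trans (Finset.card_le_card (Finset.inter_subset_left))
    have hlb : b' ≠ b → deps X φr ≤ S.card := fun h => by
      have := hlow_r Sr' (by rw [← eb]; exact h)
      exact this.trans (Finset.card_le_card (Finset.inter_subset_left))
    by_cases c1 : g (!a) b ≠ g a b
    · by_cases c2 : g a (!b) ≠ g a b
      · rw [gdeps, if_pos c1, if_pos c2]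
        by_cases hA : a' = a
        · have hB : b' ≠ b := fun hB => hS (by rw [hA, hB])
          exact (min_le_right _ _).trans (hlb hB)
        · exact (min_le_left _ _).trans (hla hA)
      · rw [gdeps, if_pos c1, if_neg c2]
        refine hla fun hA => ?_
        by_cases hB : b' = b
        · exact hS (by rw [hA, hB])
        · exact hS (by rw [hA, bool_eq_not hB]; exact not_not.1 c2)
    · by_cases c2 : g a (!b) ≠ g a b
      · rw [gdeps, if_neg c1, if_pos c2]
        refine hlb fun hB => ?_
        by_cases hA : a' = a
        · exact hS (by rw [hA, hB])
        · exact hS (by rw [hB, bool_eq_not hA]; exact not_not.1 c1)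
      · rw [gdeps, if_neg c1, if_neg c2]
        have hA : a' ≠ a := by
          intro hA
          by_cases hB : b' = b
          · exact hS (by rw [hA, hB])
          · exact hS (by rw [hA, bool_eq_not hB]; exact not_not.1 c2)
        have hB : b' ≠ b := by
          intro hB
          exact hS (by rw [hB, bool_eq_not hA]; exact not_not.1 c1)
        have h1 := hlow_l Sl' (by rw [← ea]; exact hA)
        have h2 := hlow_r Sr' (by rw [← eb]; exact hB)
        have hdisj' : Disjoint Sl' Sr' := by
          rw [Finset.disjoint_left]
          intro v hv hv'
          simp only [hSl', hSr', Finset.mem_inter, List.mem_toFinset] at hv hv'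
          exact hd v hv.2 hv'.2
        calc deps X φl + deps X φr ≤ Sl'.card + Sr'.card := Nat.add_le_add h1 h2
          _ = (Sl' ∪ Sr').card := (Finset.card_union_of_disjoint hdisj').symm
          _ ≤ S.card := Finset.card_le_card
              (Finset.union_subset Finset.inter_subset_left Finset.inter_subset_left)

lemma spec_of_ro (φ : Fm α) (X : α → Bool) (hro : ReadOnce φ) : Spec φ X := by
  induction φ with
  | var v =>
      constructor
      · refine ⟨{v}, by simp [varsOf], by simp [deps], ?_⟩
        simp [evalB, flipV]
      · intro S hS
        have hv : v ∈ S := by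
          by_contra h
          exact hS (by simp [evalB, flipV, h])
        simpa [deps, Finset.card_pos, Finset.Nonempty] using
          Finset.card_pos.2 ⟨v, hv⟩
  | not φ ih =>
      obtain ⟨⟨S, h1, h2, h3⟩, hlow⟩ := ih hro
      constructor
      · exact ⟨S, h1, h2, by simpa [evalB] using h3⟩
      · intro S hS
        exact hlow S (by simpa [evalB] using hS)
  | and φ ψ ihφ ihψ =>
      have hro' : ReadOnce φ ∧ ReadOnce ψ ∧ ∀ v ∈ varsOf φ, v ∉ varsOf ψ := by
        have := hro
        simp only [ReadOnce, varsOf, List.nodup_append] at this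
        exact ⟨this.1, this.2.1, fun v hv hv' => this.2.2 v hv v hv' rfl⟩
      have h := gate_spec X (· && ·) (by decide) φ ψ hro'.2.2
        (ihφ hro'.1) (ihψ hro'.2.1)
      obtain ⟨⟨S, h1, h2, h3⟩, hlow⟩ := h
      have hdeq : deps X (Fm.and φ ψ) =
          gdeps (· && ·) (evalB X φ) (evalB X ψ) (deps X φ) (deps X ψ) := rfl
      constructor
      · exact ⟨S, fun v hv => by simpa [varsOf] using h1 v hv,
          by rw [h2, hdeq], by simpa [evalB] using h3⟩
      · intro S hS
        rw [hdeq]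
        exact hlow S (by simpa [evalB] using hS)
  | or φ ψ ihφ ihψ =>
      have hro' : ReadOnce φ ∧ ReadOnce ψ ∧ ∀ v ∈ varsOf φ, v ∉ varsOf ψ := by
        have := hro
        simp only [ReadOnce, varsOf, List.nodup_append] at this
        exact ⟨this.1, this.2.1, fun v hv hv' => this.2.2 v hv v hv' rfl⟩
      have h := gate_spec X (· || ·) (by decide) φ ψ hro'.2.2
        (ihφ hro'.1) (ihψ hro'.2.1)
      obtain ⟨⟨S, h1, h2, h3⟩, hlow⟩ := h
      have hdeq : deps X (Fm.or φ ψ) =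
          gdeps (· || ·) (evalB X φ) (evalB X ψ) (deps X φ) (deps X ψ) := rfl
      constructor
      · exact ⟨S, fun v hv => by simpa [varsOf] using h1 v hv,
          by rw [h2, hdeq], by simpa [evalB] using h3⟩
      · intro S hS
        rw [hdeq]
        exact hlow S (by simpa [evalB] using hS)
  | xor φ ψ ihφ ihψ =>
      have hro' : ReadOnce φ ∧ ReadOnce ψ ∧ ∀ v ∈ varsOf φ, v ∉ varsOf ψ := by
        have := hro
        simp only [ReadOnce, varsOf, List.nodup_append] at this
        exact ⟨this.1, this.2.1, fun v hv hv' => this.2.2 v hv v hv' rfl⟩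
      have h := gate_spec X Bool.xor (by decide) φ ψ hro'.2.2
        (ihφ hro'.1) (ihψ hro'.2.1)
      obtain ⟨⟨S, h1, h2, h3⟩, hlow⟩ := h
      have hdeq : deps X (Fm.xor φ ψ) =
          gdeps Bool.xor (evalB X φ) (evalB X ψ) (deps X φ) (deps X ψ) := rfl
      constructor
      · exact ⟨S, fun v hv => by simpa [varsOf] using h1 v hv,
          by rw [h2, hdeq], by simpa [evalB] using h3⟩
      · intro S hS
        rw [hdeq]
        exact hlow S (by simpa [evalB] using hS)

end Aux

/-- For every non-constant read-once formula, the DEPENDS recursion computes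
the flip distance. -/
theorem deps_eq_fmDist {α : Type} [DecidableEq α] (φ : Fm α) (X : α → Bool)
    (hro : ReadOnce φ)
    (hnc : ∃ S : Finset α, evalB (flipV X S) φ ≠ evalB X φ) :
    deps X φ = fmDist φ X := by
  obtain ⟨⟨S, _, hcard, hchg⟩, hlow⟩ := spec_of_ro φ X hro
  refine le_antisymm ?_ ?_
  · refine le_csInf ⟨S.card, S, rfl, hchg⟩ ?_
    rintro k ⟨T, rfl, hT⟩
    exact hlow T hT
  · exact Nat.sInf_le ⟨S, hcard, hchg⟩
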